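/- There exists an absolute constant C > 0 with the following property: suppose H > 1 and {N+1,…,N+H} is an interval whose product (N+1)⋯(N+H) has the same squarefree component as a! for some 1 ≤ a < N, and set P := max(a,H). Then there exist P-smooth natural numbers a₁, a₂ with a₁ ≤ C·exp(C·P/H)·H^C and a₂ ≤ C·exp(C·P/H)·H^C, natural numbers n₁, n₂, and a natural number h with 1 ≤ h ≤ H, such that a₁·n₁² and a₂·n₂² both lie in {N+1,…,N+H} and a₁·n₁² + h = a₂·n₂². -/

import Mathlib

/-- The product `(N+1) ⋯ (N+H)`. -/
def intervalProd (N H : ℕ) : ℕ := ∏ i ∈ Finset.Icc 1 H, (N + i)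

/-- The squarefree component of `n`: the squarefree number `s` such that `n = s·m²`
(the product of primes dividing `n` to an odd power). -/
def sqfreePart (n : ℕ) : ℕ := ∏ p ∈ n.primeFactors, p ^ (n.factorization p % 2)

/-- The interval `{N+1, …, N+H}` is of type `F₃`: its product has the same squarefree
component as `a!` for some `1 ≤ a < N`. -/
def IsF3Interval (N H : ℕ) : Prop :=
  1 ≤ H ∧ ∃ a : ℕ, 1 ≤ a ∧ a < N ∧
    sqfreePart (intervalProd N H) = sqfreePart (Nat.factorial a)

/-- `ℱ₃`: natural numbers of the form `N+H` for some type `F₃` interval `{N+1,…,N+H}`. -/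
def F3 : Set ℕ := {n | ∃ N H : ℕ, IsF3Interval N H ∧ n = N + H}

/-- `ℱ₃¹`: natural numbers `n` with `s(n) = s(a!)` for some `1 ≤ a < n - 1`. -/
def F31 : Set ℕ :=
  {n | ∃ a : ℕ, 1 ≤ a ∧ a + 1 < n ∧ sqfreePart n = sqfreePart (Nat.factorial a)}

/-- The number of elements of `S` in `[1, x]`. -/
noncomputable def countIn (S : Set ℕ) (x : ℝ) : ℕ :=
  Set.ncard {n : ℕ | n ∈ S ∧ 1 ≤ n ∧ (n : ℝ) ≤ x}

/-- `n` is `y`-smooth: all prime factors of `n` are at most `y`. -/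
def NatSmooth (y : ℕ) (n : ℕ) : Prop := ∀ p : ℕ, p.Prime → p ∣ n → p ≤ y

lemma sqfreePart_ne_zero (n : ℕ) : sqfreePart n ≠ 0 :=
  Finset.prod_ne_zero_iff.mpr fun p hp =>
    pow_ne_zero _ (Nat.pos_of_mem_primeFactors hp).ne'

lemma factorization_sqfreePart (n p : ℕ) :
    (sqfreePart n).factorization p = n.factorization p % 2 := by
  by_cases hp : p.Prime
  · unfold sqfreePart
    rw [Nat.factorization_prod (fun q hq => pow_ne_zero _ (Nat.pos_of_mem_primeFactors hq).ne')]
    rw [Finset.sum_apply']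
    by_cases hmem : p ∈ n.primeFactors
    · rw [Finset.sum_eq_single p]
      · rw [Nat.Prime.factorization_pow (Nat.prime_of_mem_primeFactors hmem), Finsupp.single_apply]
        simp
      · intro q hq hqp
        rw [Nat.Prime.factorization_pow (Nat.prime_of_mem_primeFactors hq), Finsupp.single_apply]
        simp [hqp]
      · intro h; exact absurd hmem h
    · have h0 : n.factorization p = 0 := by
        rw [← Finsupp.notMem_support_iff, Nat.support_factorization]; exact hmem
      rw [h0]
      refine Finset.sum_eq_zero fun q hq => ?_
      rw [Nat.Prime.factorization_pow (Nat.prime_of_mem_primeFactors hq), Finsupp.single_apply]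
      exact if_neg fun h : q = p => hmem (h ▸ hq)
  · rw [Nat.factorization_eq_zero_of_not_prime _ hp, Nat.factorization_eq_zero_of_not_prime _ hp]

lemma sqfreePart_mul_sq (n : ℕ) (hn : n ≠ 0) : ∃ m, n = sqfreePart n * m ^ 2 := by
  refine ⟨∏ p ∈ n.primeFactors, p ^ (n.factorization p / 2), ?_⟩
  unfold sqfreePart
  rw [← Finset.prod_pow, ← Finset.prod_mul_distrib]
  have h1 : ∀ p ∈ n.primeFactors, p ^ (n.factorization p % 2) * (p ^ (n.factorization p / 2)) ^ 2
      = p ^ n.factorization p := by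
    intro p _
    rw [← pow_mul, ← pow_add]
    congr 1
    omega
  rw [Finset.prod_congr rfl h1]
  conv_lhs => rw [← Nat.factorization_prod_pow_eq_self hn,
    Nat.prod_factorization_eq_prod_primeFactors]

lemma prime_dvd_sqfreePart_iff {p : ℕ} (hp : p.Prime) (n : ℕ) :
    p ∣ sqfreePart n ↔ n.factorization p % 2 = 1 := by
  rw [Nat.Prime.dvd_iff_one_le_factorization hp (sqfreePart_ne_zero n),
    factorization_sqfreePart]
  omega

lemma count_multiples_le (N H p : ℕ) (hp : 0 < p) :
    ((Finset.Icc 1 H).filter (fun i => p ∣ N + i)).card ≤ H / p + 1 := by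
  have hcard : (Finset.Icc (N / p + 1) ((N + H) / p)).card ≤ H / p + 1 := by
    rw [Nat.card_Icc]
    have hN := Nat.div_add_mod N p
    have hH := Nat.div_add_mod H p
    have hmN := Nat.mod_lt N hp
    have hmH := Nat.mod_lt H hp
    have key : N + H < p * (N / p + H / p + 2) := by
      rw [Nat.mul_add, Nat.mul_add]; omega
    have h2 : (N + H) / p < N / p + H / p + 2 := Nat.div_lt_of_lt_mul key
    generalize (N + H) / p = z at *
    generalize N / p = x at *
    generalize H / p = y at *
    omega
  refine le_trans (Finset.card_le_card_of_injOn (fun i => (N + i) / p) ?_ ?_) hcard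
  · intro i hi
    simp only [Finset.mem_coe, Finset.mem_filter, Finset.mem_Icc] at hi
    obtain ⟨⟨hi1, hi2⟩, hdvd⟩ := hi
    have hmul : (N + i) / p * p = N + i := Nat.div_mul_cancel hdvd
    simp only [Finset.mem_coe, Finset.mem_Icc]
    constructor
    · by_contra hlt
      push_neg at hlt
      have : (N + i) / p ≤ N / p := by omega
      have : (N + i) / p * p ≤ N / p * p := Nat.mul_le_mul_right p this
      have := Nat.div_mul_le_self N p
      omega
    · exact Nat.div_le_div_right (by omega)
  · intro i hi j hj hij
    simp only [Finset.coe_filter, Set.mem_setOf_eq, Finset.mem_Icc] at hi hj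
    have h1 : (N + i) / p * p = N + i := Nat.div_mul_cancel hi.2
    have h2 : (N + j) / p * p = N + j := Nat.div_mul_cancel hj.2
    simp only at hij
    rw [hij] at h1
    omega

lemma factorization_intervalProd (N H p : ℕ) :
    (intervalProd N H).factorization p = ∑ i ∈ Finset.Icc 1 H, (N + i).factorization p := by
  rw [intervalProd, Nat.factorization_prod
    (fun i hi => by have := (Finset.mem_Icc.mp hi).1; omega)]
  rw [Finset.sum_apply']

lemma smooth_key {N H a : ℕ} (ha : 1 ≤ a)
    (heq : sqfreePart (intervalProd N H) = sqfreePart (Nat.factorial a))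
    {i : ℕ} (hi : i ∈ Finset.Icc 1 H) : NatSmooth (max a H) (sqfreePart (N + i)) := by
  intro p hp hdvd
  by_contra hgt
  push_neg at hgt
  have hpa : a < p := lt_of_le_of_lt (le_max_left a H) hgt
  have hpH : H < p := lt_of_le_of_lt (le_max_right a H) hgt
  rw [prime_dvd_sqfreePart_iff hp] at hdvd
  have hpi : p ∣ N + i := by
    rw [Nat.Prime.dvd_iff_one_le_factorization hp (by have := (Finset.mem_Icc.mp hi).1; omega)]
    omega
  have honly : ∀ j ∈ Finset.Icc 1 H, j ≠ i → (N + j).factorization p = 0 := by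
    intro j hj hne
    apply Nat.factorization_eq_zero_of_not_dvd
    intro hdj
    simp only [Finset.mem_Icc] at hj
    have hi' := Finset.mem_Icc.mp hi
    rcases lt_or_gt_of_ne hne with h | h
    · have hd : p ∣ (N + i) - (N + j) := Nat.dvd_sub hpi hdj
      have : (N + i) - (N + j) = i - j := by omega
      rw [this] at hd
      have := Nat.le_of_dvd (by omega) hd
      omega
    · have hd : p ∣ (N + j) - (N + i) := Nat.dvd_sub hdj hpi
      have : (N + j) - (N + i) = j - i := by omega
      rw [this] at hd
      have := Nat.le_of_dvd (by omega) hd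
      omega
  have hprod : (intervalProd N H).factorization p = (N + i).factorization p := by
    rw [factorization_intervalProd]
    exact Finset.sum_eq_single i honly (fun h => absurd hi h)
  have hodd : p ∣ sqfreePart (intervalProd N H) := by
    rw [prime_dvd_sqfreePart_iff hp, hprod]; exact hdvd
  rw [heq, prime_dvd_sqfreePart_iff hp] at hodd
  have : p ∣ Nat.factorial a := by
    rw [Nat.Prime.dvd_iff_one_le_factorization hp (Nat.factorial_ne_zero a)]
    omega
  exact absurd ((Nat.Prime.dvd_factorial hp).mp this) (by omega)

lemma div_le_factorization_factorial {q H : ℕ} (hq : q.Prime) :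
    H / q ≤ (Nat.factorial H).factorization q := by
  rcases Nat.eq_zero_or_pos (H / q) with h | h
  · omega
  have hqH : q ≤ H := by
    by_contra hc
    push_neg at hc
    rw [Nat.div_eq_of_lt hc] at h
    omega
  haveI : Fact q.Prime := ⟨hq⟩
  rw [Nat.factorization_def _ hq,
    padicValNat_factorial (b := Nat.log q H + 1) (Nat.lt_succ_self _)]
  have h1 : (1 : ℕ) ∈ Finset.Ico 1 (Nat.log q H + 1) := by
    simp [Nat.log_pos hq.one_lt hqH]
  calc H / q = H / q ^ 1 := by rw [pow_one]
    _ ≤ ∑ i ∈ Finset.Ico 1 (Nat.log q H + 1), H / q ^ i :=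
        Finset.single_le_sum (f := fun i => H / q ^ i) (fun i _ => Nat.zero_le _) h1

lemma prod_pow_div_dvd_factorial (H P : ℕ) :
    ∏ p ∈ (Finset.range (P + 1)).filter Nat.Prime, p ^ (H / p) ∣ Nat.factorial H := by
  set S := (Finset.range (P + 1)).filter Nat.Prime with hS
  have hne : ∀ p ∈ S, p ^ (H / p) ≠ 0 := fun p hp =>
    pow_ne_zero _ (Nat.Prime.pos (Finset.mem_filter.mp hp).2).ne'
  rw [← Nat.factorization_le_iff_dvd (Finset.prod_ne_zero_iff.mpr hne)
    (Nat.factorial_ne_zero H), Nat.factorization_prod hne, Finsupp.le_def]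
  intro q
  rw [Finset.sum_apply']
  have hterm : ∀ p ∈ S, ((p ^ (H / p)).factorization) q
      = if p = q then H / p else 0 := by
    intro p hp
    rw [Nat.Prime.factorization_pow (Finset.mem_filter.mp hp).2, Finsupp.single_apply]
  rw [Finset.sum_congr rfl hterm]
  by_cases hqS : q ∈ S
  · rw [Finset.sum_ite_eq' S q (fun p => H / p), if_pos hqS]
    exact div_le_factorization_factorial (Finset.mem_filter.mp hqS).2
  · rw [Finset.sum_ite_eq' S q (fun p => H / p), if_neg hqS]
    exact Nat.zero_le _

lemma prod_sqfreePart_le {N H a : ℕ} (ha : 1 ≤ a)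
    (heq : sqfreePart (intervalProd N H) = sqfreePart (Nat.factorial a)) :
    ∏ i ∈ Finset.Icc 1 H, sqfreePart (N + i) ≤ Nat.factorial H * 4 ^ (max a H) := by
  set P := max a H with hP
  set S := (Finset.range (P + 1)).filter Nat.Prime with hS
  set Q := ∏ i ∈ Finset.Icc 1 H, sqfreePart (N + i) with hQ
  have hQ0 : Q ≠ 0 := Finset.prod_ne_zero_iff.mpr fun i _ => sqfreePart_ne_zero _
  -- exponent bound
  have hexp : ∀ p, p.Prime → Q.factorization p ≤ H / p + 1 := by
    intro p hp
    have h1 : Q.factorization p = ∑ i ∈ Finset.Icc 1 H, (N + i).factorization p % 2 := by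
      rw [hQ, Nat.factorization_prod (fun i _ => sqfreePart_ne_zero _), Finset.sum_apply']
      exact Finset.sum_congr rfl fun i _ => factorization_sqfreePart _ _
    rw [h1]
    calc ∑ i ∈ Finset.Icc 1 H, (N + i).factorization p % 2
        ≤ ((Finset.Icc 1 H).filter (fun i => p ∣ N + i)).card := by
          rw [Finset.card_filter]
          apply Finset.sum_le_sum
          intro i _
          by_cases h : p ∣ N + i
          · rw [if_pos h]; omega
          · rw [Nat.factorization_eq_zero_of_not_dvd h, if_neg h]
      _ ≤ H / p + 1 := count_multiples_le N H p hp.pos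
  -- prime factors are at most P
  have hsub : Q.primeFactors ⊆ S := by
    intro p hp
    have hpp := Nat.prime_of_mem_primeFactors hp
    have hpd : p ∣ Q := Nat.dvd_of_mem_primeFactors hp
    rw [hQ] at hpd
    obtain ⟨i, hi, hdvd⟩ := (Prime.dvd_finset_prod_iff hpp.prime _).mp hpd
    have := smooth_key ha heq hi p hpp hdvd
    simp only [hS, Finset.mem_filter, Finset.mem_range]
    exact ⟨by omega, hpp⟩
  calc Q = ∏ p ∈ Q.primeFactors, p ^ Q.factorization p := by
        conv_lhs => rw [← Nat.factorization_prod_pow_eq_self hQ0,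
          Nat.prod_factorization_eq_prod_primeFactors]
    _ ≤ ∏ p ∈ Q.primeFactors, p ^ (H / p + 1) := by
        apply Finset.prod_le_prod' -- maybe wrong name
        intro p hp
        exact Nat.pow_le_pow_right (Nat.prime_of_mem_primeFactors hp).pos
          (hexp p (Nat.prime_of_mem_primeFactors hp))
    _ ≤ ∏ p ∈ S, p ^ (H / p + 1) := by
        apply Finset.prod_le_prod_of_subset_of_one_le' hsub
        intro p hp _
        exact Nat.one_le_pow _ _ (Finset.mem_filter.mp hp).2.pos
    _ = (∏ p ∈ S, p ^ (H / p)) * ∏ p ∈ S, p := by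
        rw [← Finset.prod_mul_distrib]
        exact Finset.prod_congr rfl fun p _ => by rw [pow_succ]
    _ ≤ Nat.factorial H * 4 ^ P := by
        apply Nat.mul_le_mul
        · exact Nat.le_of_dvd (Nat.factorial_pos H) (prod_pow_div_dvd_factorial H P)
        · exact le_trans (le_of_eq (by rw [primorial])) (primorial_le_4_pow P)

lemma real_bound {s H P : ℕ} (hH : 2 ≤ H)
    (hs : s ^ H ≤ (Nat.factorial H * 4 ^ P) ^ 2) :
    (s : ℝ) ≤ 4 * Real.exp (4 * P / H) * (H : ℝ) ^ (4 : ℝ) := by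
  have hH0 : (0:ℝ) < H := by exact_mod_cast Nat.lt_of_lt_of_le (by norm_num) hH
  have hH1 : (1:ℝ) ≤ H := by exact_mod_cast Nat.le_of_lt (Nat.lt_of_lt_of_le (by norm_num) hH)
  set E := Real.exp (4 * (P:ℝ) / (H:ℝ)) with hE
  have hEpos : (0:ℝ) < E := Real.exp_pos _
  have h16 : (16:ℝ) ^ P ≤ E ^ H := by
    have e1 : (16:ℝ) ^ P ≤ Real.exp 4 ^ P := by
      apply pow_le_pow_left₀ (by norm_num)
      calc (16:ℝ) = 2 ^ 4 := by norm_num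
        _ ≤ Real.exp 1 ^ 4 := by
            apply pow_le_pow_left₀ (by norm_num)
            linarith [Real.add_one_le_exp (1:ℝ)]
        _ = Real.exp 4 := by rw [← Real.exp_one_rpow 4]; norm_num
    have e2 : Real.exp 4 ^ P = Real.exp (4 * P) := by
      rw [← Real.exp_nat_mul]; ring_nf
    have e3 : E ^ H = Real.exp (4 * P) := by
      rw [hE, ← Real.exp_nat_mul]
      congr 1
      field_simp
    rw [e3]; rw [e2] at e1; exact e1
  have h1 : (s:ℝ) ^ H ≤ ((H:ℝ) ^ 2 * E) ^ H := by
    have c1 : (s:ℝ) ^ H ≤ (((H:ℝ) ^ H) * 4 ^ P) ^ 2 := by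
      have : ((s ^ H : ℕ) : ℝ) ≤ (((Nat.factorial H * 4 ^ P) ^ 2 : ℕ) : ℝ) := by
        exact_mod_cast hs
      push_cast at this
      have hf : ((Nat.factorial H : ℕ) : ℝ) ≤ (H:ℝ) ^ H := by
        exact_mod_cast Nat.factorial_le_pow H
      calc (s:ℝ) ^ H ≤ ((Nat.factorial H : ℕ) * (4:ℝ) ^ P) ^ 2 := this
        _ ≤ (((H:ℝ) ^ H) * 4 ^ P) ^ 2 := by
            apply pow_le_pow_left₀ (by positivity)
            apply mul_le_mul_of_nonneg_right hf (by positivity)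
    have c2 : (((H:ℝ) ^ H) * 4 ^ P) ^ 2 = ((H:ℝ) ^ 2) ^ H * 16 ^ P := by
      rw [mul_pow, ← pow_mul, ← pow_mul, mul_comm H 2, pow_mul, ← pow_mul, mul_comm P 2, pow_mul]
      norm_num [pow_mul]
    have c3 : ((H:ℝ) ^ 2) ^ H * 16 ^ P ≤ ((H:ℝ) ^ 2) ^ H * E ^ H := by
      apply mul_le_mul_of_nonneg_left h16 (by positivity)
    calc (s:ℝ) ^ H ≤ ((H:ℝ) ^ 2) ^ H * E ^ H := by rw [c2] at c1; linarith
      _ = ((H:ℝ) ^ 2 * E) ^ H := by rw [mul_pow]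
  have h2 : (s:ℝ) ≤ (H:ℝ) ^ 2 * E :=
    le_of_pow_le_pow_left₀ (by omega) (by positivity) h1
  have h3 : (H:ℝ) ^ (4:ℝ) = (H:ℝ) ^ (4:ℕ) := by
    rw [← Real.rpow_natCast (H:ℝ) 4]; norm_num
  rw [h3]
  have h4 : (H:ℝ) ^ 2 ≤ (H:ℝ) ^ 4 := pow_le_pow_right₀ hH1 (by norm_num)
  nlinarith [pow_nonneg hH0.le 4, pow_nonneg hH0.le 2]

set_option maxHeartbeats 1000000 in
theorem stmt_14 :
    ∃ C : ℝ, 0 < C ∧ ∀ N H a : ℕ, 1 < H → 1 ≤ a → a < N →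
      sqfreePart (intervalProd N H) = sqfreePart (Nat.factorial a) →
      ∃ a₁ a₂ n₁ n₂ h : ℕ,
        NatSmooth (max a H) a₁ ∧ NatSmooth (max a H) a₂ ∧
        (a₁ : ℝ) ≤ C * Real.exp (C * (max a H : ℝ) / (H : ℝ)) * (H : ℝ) ^ C ∧
        (a₂ : ℝ) ≤ C * Real.exp (C * (max a H : ℝ) / (H : ℝ)) * (H : ℝ) ^ C ∧
        1 ≤ h ∧ h ≤ H ∧
        N + 1 ≤ a₁ * n₁ ^ 2 ∧ a₁ * n₁ ^ 2 ≤ N + H ∧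
        N + 1 ≤ a₂ * n₂ ^ 2 ∧ a₂ * n₂ ^ 2 ≤ N + H ∧
        a₁ * n₁ ^ 2 + h = a₂ * n₂ ^ 2 := by
  refine ⟨4, by norm_num, ?_⟩
  intro N H a hH ha haN heq
  have hH2 : 2 ≤ H := hH
  set P := max a H with hP
  set B := Nat.factorial H * 4 ^ P with hB
  have hB1 : 1 ≤ B := Nat.one_le_iff_ne_zero.mpr (by positivity)
  set good := (Finset.Icc 1 H).filter (fun i => sqfreePart (N + i) ^ H ≤ B ^ 2) with hgood
  have hcard : 2 ≤ good.card := by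
    by_contra hc
    push_neg at hc
    set bad := Finset.Icc 1 H \ good with hbad
    have hgsub : good ⊆ Finset.Icc 1 H := Finset.filter_subset _ _
    have hbcard : H - 1 ≤ bad.card := by
      rw [hbad, Finset.card_sdiff_of_subset hgsub, Nat.card_Icc]
      omega
    have hbne : bad.Nonempty := Finset.card_pos.mp (by omega)
    have key1 : (B ^ 2) ^ bad.card < ∏ i ∈ bad, sqfreePart (N + i) ^ H := by
      rw [← Finset.prod_const]
      refine Finset.prod_lt_prod_of_nonempty (fun i _ => by positivity) ?_ hbne
      intro i hi
      rw [hbad, Finset.mem_sdiff, hgood, Finset.mem_filter] at hi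
      push_neg at hi
      exact hi.2 hi.1
    have key2 : ∏ i ∈ bad, sqfreePart (N + i) ^ H ≤ B ^ H := by
      rw [Finset.prod_pow]
      refine le_trans (Nat.pow_le_pow_left ?_ H) (Nat.pow_le_pow_left (prod_sqfreePart_le ha heq) H)
      exact Finset.prod_le_prod_of_subset_of_one_le' Finset.sdiff_subset
        (fun i _ _ => Nat.one_le_iff_ne_zero.mpr (sqfreePart_ne_zero _))
    have key3 : B ^ H ≤ (B ^ 2) ^ bad.card := by
      rw [← pow_mul]
      exact Nat.pow_le_pow_right hB1 (by omega)
    omega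
  have main : ∀ i j : ℕ, i ∈ good → j ∈ good → i < j →
      ∃ a₁ a₂ n₁ n₂ h : ℕ,
        NatSmooth (max a H) a₁ ∧ NatSmooth (max a H) a₂ ∧
        (a₁ : ℝ) ≤ 4 * Real.exp (4 * (max a H : ℝ) / (H : ℝ)) * (H : ℝ) ^ (4:ℝ) ∧
        (a₂ : ℝ) ≤ 4 * Real.exp (4 * (max a H : ℝ) / (H : ℝ)) * (H : ℝ) ^ (4:ℝ) ∧
        1 ≤ h ∧ h ≤ H ∧
        N + 1 ≤ a₁ * n₁ ^ 2 ∧ a₁ * n₁ ^ 2 ≤ N + H ∧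
        N + 1 ≤ a₂ * n₂ ^ 2 ∧ a₂ * n₂ ^ 2 ≤ N + H ∧
        a₁ * n₁ ^ 2 + h = a₂ * n₂ ^ 2 := by
    intro i j hi hj hij
    rw [hgood, Finset.mem_filter] at hi hj
    obtain ⟨hiIcc, hiB⟩ := hi
    obtain ⟨hjIcc, hjB⟩ := hj
    have hi1 := Finset.mem_Icc.mp hiIcc
    have hj1 := Finset.mem_Icc.mp hjIcc
    obtain ⟨m₁, hm₁⟩ := sqfreePart_mul_sq (N + i) (by omega)
    obtain ⟨m₂, hm₂⟩ := sqfreePart_mul_sq (N + j) (by omega)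
    refine ⟨sqfreePart (N + i), sqfreePart (N + j), m₁, m₂, j - i,
      smooth_key ha heq hiIcc, smooth_key ha heq hjIcc,
      ?_, ?_,
      by omega, by omega, ?_, ?_, ?_, ?_, ?_⟩
    · rw [← Nat.cast_max]; exact real_bound hH2 hiB
    · rw [← Nat.cast_max]; exact real_bound hH2 hjB
    · rw [← hm₁]; omega
    · rw [← hm₁]; omega
    · rw [← hm₂]; omega
    · rw [← hm₂]; omega
    · rw [← hm₁, ← hm₂]; omega
  obtain ⟨u, hu, v, hv, huv⟩ := Finset.one_lt_card.mp (show 1 < good.card by omega)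
  rcases lt_or_gt_of_ne huv with hlt | hlt
  · exact main u v hu hv hlt
  · exact main v u hv hu hlt
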